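/- Let Φ : U → ℝ^k be C², x ∈ U, and suppose ‖Φ'(y)^{−1}‖ ≤ c₀ and ‖Φ''(y)‖ ≤ c₁ for all y ∈ U. Let L : ℝ^k → ℝ be a linear functional of norm 1 and let v be the unit vector with Φ'(x)[v] = a·(grad of L) for some a > 0. Then (L∘Φ)'(x)[v] ≥ 1/c₀, and for all y ∈ B(x,ρ) ∩ U with ρ ≤ 1/(2 c₀ c₁), (L∘Φ)'(y)[v] ≥ 1/(2c₀). -/

import Mathlib

open Metric Set
open scoped RealInnerProductSpace

/-- Directional lower bound for a composed functional: if `‖Φ'(y)⁻¹‖ ≤ c₀` and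
`‖Φ''(y)‖ ≤ c₁` on `U`, `L = ⟪·, w⟫` with `‖w‖ = 1`, and `v` is the unit vector
with `Φ'(x)[v] = a w`, `a > 0`, then `(L∘Φ)'(x)[v] ≥ 1/c₀`, and
`(L∘Φ)'(y)[v] ≥ 1/(2c₀)` for all `y ∈ B(x,ρ) ∩ U` whenever `ρ ≤ 1/(2c₀c₁)`. -/
theorem composed_functional_lower_bound (k : ℕ) (c₀ c₁ : ℝ) (hc₀ : 0 < c₀) (hc₁ : 0 < c₁)
    (U : Set (EuclideanSpace ℝ (Fin k))) (hU : IsOpen U)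
    (Φ : EuclideanSpace ℝ (Fin k) → EuclideanSpace ℝ (Fin k))
    (hC2 : ContDiffOn ℝ 2 Φ U)
    (D : EuclideanSpace ℝ (Fin k) → (EuclideanSpace ℝ (Fin k) ≃L[ℝ] EuclideanSpace ℝ (Fin k)))
    (hD : ∀ y ∈ U, HasFDerivAt Φ
      ((D y : EuclideanSpace ℝ (Fin k) →L[ℝ] EuclideanSpace ℝ (Fin k))) y)
    (hDinv : ∀ y ∈ U, ‖((D y).symm :
      EuclideanSpace ℝ (Fin k) →L[ℝ] EuclideanSpace ℝ (Fin k))‖ ≤ c₀)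
    (hD' : ∀ y ∈ U, ‖fderiv ℝ
      (fun z => ((D z : EuclideanSpace ℝ (Fin k) →L[ℝ] EuclideanSpace ℝ (Fin k)))) y‖ ≤ c₁)
    (x : EuclideanSpace ℝ (Fin k)) (hx : x ∈ U)
    (L : EuclideanSpace ℝ (Fin k) →L[ℝ] ℝ) (w : EuclideanSpace ℝ (Fin k))
    (hw : ‖w‖ = 1) (hL : ∀ y, L y = ⟪y, w⟫)
    (v : EuclideanSpace ℝ (Fin k)) (hv : ‖v‖ = 1) (a : ℝ) (ha : 0 < a)
    (hav : (D x) v = a • w) :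
    1 / c₀ ≤ L ((D x) v) ∧
      ∀ ρ : ℝ, 0 < ρ → ρ ≤ 1 / (2 * c₀ * c₁) → closedBall x ρ ⊆ U →
        ∀ y ∈ closedBall x ρ, 1 / (2 * c₀) ≤ L ((D y) v) := by
  set g : EuclideanSpace ℝ (Fin k) →
      (EuclideanSpace ℝ (Fin k) →L[ℝ] EuclideanSpace ℝ (Fin k)) :=
    fun z => ((D z : EuclideanSpace ℝ (Fin k) →L[ℝ] EuclideanSpace ℝ (Fin k))) with hg_def
  -- a ≥ 1/c₀
  have hxv : L ((D x) v) = a := by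
    rw [hav, hL, real_inner_smul_left, real_inner_self_eq_norm_sq, hw]
    ring
  have h1 : (1 : ℝ) ≤ c₀ * a := by
    have h := ((D x).symm :
      EuclideanSpace ℝ (Fin k) →L[ℝ] EuclideanSpace ℝ (Fin k)).le_opNorm ((D x) v)
    have hsymm : ((D x).symm :
        EuclideanSpace ℝ (Fin k) →L[ℝ] EuclideanSpace ℝ (Fin k)) ((D x) v) = v :=
      (D x).symm_apply_apply v
    rw [hsymm, hv, hav, norm_smul, hw, Real.norm_eq_abs, abs_of_pos ha, mul_one] at h
    calc (1 : ℝ) ≤ ‖((D x).symm :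
          EuclideanSpace ℝ (Fin k) →L[ℝ] EuclideanSpace ℝ (Fin k))‖ * a := h
      _ ≤ c₀ * a := by
          apply mul_le_mul_of_nonneg_right (hDinv x hx) ha.le
  have ha' : 1 / c₀ ≤ a := by
    rw [div_le_iff₀ hc₀]
    linarith [h1]
  refine ⟨by rw [hxv]; exact ha', ?_⟩
  -- differentiability of g on U
  have hgdiff : ∀ z ∈ U, DifferentiableAt ℝ g z := by
    intro z hz
    have hfd : DifferentiableAt ℝ (fderiv ℝ Φ) z := by
      have hca : ContDiffAt ℝ 2 Φ z := hC2.contDiffAt (hU.mem_nhds hz)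
      have := hca.fderiv_right (m := 1) (by norm_num)
      exact this.differentiableAt one_ne_zero
    have heq : g =ᶠ[nhds z] fderiv ℝ Φ := by
      filter_upwards [hU.mem_nhds hz] with u hu
      exact ((hD u hu).fderiv).symm
    exact hfd.congr_of_eventuallyEq heq
  intro ρ hρ hρle hsub y hy
  -- Lipschitz bound on g over the ball
  have hlip : ‖g y - g x‖ ≤ c₁ * ρ := by
    have hconv : Convex ℝ (closedBall x ρ) := convex_closedBall x ρ
    have := hconv.norm_image_sub_le_of_norm_fderiv_le
      (fun z hz => hgdiff z (hsub hz)) (fun z hz => hD' z (hsub hz))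
      (mem_closedBall_self hρ.le) hy
    calc ‖g y - g x‖ ≤ c₁ * ‖y - x‖ := this
      _ ≤ c₁ * ρ := by
          apply mul_le_mul_of_nonneg_left _ hc₁.le
          rw [← dist_eq_norm]
          exact mem_closedBall.mp hy
  have hdiffv : ‖(D y) v - (D x) v‖ ≤ c₁ * ρ := by
    have h2 : ‖(g y - g x) v‖ ≤ ‖g y - g x‖ * ‖v‖ := (g y - g x).le_opNorm v
    rw [hv, mul_one] at h2
    have h3 : (g y - g x) v = (D y) v - (D x) v := by
      simp [hg_def]
    rw [h3] at h2
    exact h2.trans hlip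
  have hinner : ⟪(D y) v - (D x) v, w⟫ ≥ -(c₁ * ρ) := by
    have := abs_real_inner_le_norm ((D y) v - (D x) v) w
    rw [hw, mul_one] at this
    have := neg_le_of_abs_le this
    linarith [hdiffv]
  have hLy : L ((D y) v) = a + ⟪(D y) v - (D x) v, w⟫ := by
    have h4 : ⟪(D y) v - (D x) v, w⟫ = ⟪(D y) v, w⟫ - ⟪(D x) v, w⟫ := inner_sub_left _ _ _
    have h5 : ⟪(D x) v, w⟫ = a := by
      rw [hav, real_inner_smul_left, real_inner_self_eq_norm_sq, hw]; ring
    rw [hL]; linarith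
  have hc₁ρ : c₁ * ρ ≤ 1 / (2 * c₀) := by
    have : c₁ * ρ ≤ c₁ * (1 / (2 * c₀ * c₁)) :=
      mul_le_mul_of_nonneg_left hρle hc₁.le
    calc c₁ * ρ ≤ c₁ * (1 / (2 * c₀ * c₁)) := this
      _ = 1 / (2 * c₀) := by field_simp
  rw [hLy]
  have : 1 / c₀ - 1 / (2 * c₀) = 1 / (2 * c₀) := by field_simp; ring
  linarith [hinner, ha']
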